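/- Let T and F be nonnegative n×n matrices with ρ(T) < 1, F ≠ 0, and T + F irreducible. Then Q = F(I−T)^{-1} has a zero row in exactly those positions where F has a zero row; consequently Q is irreducible if and only if every row of F contains a positive entry. -/

import Mathlib

open Matrix Filter Topology

noncomputable def specRad {n : ℕ} (A : Matrix (Fin n) (Fin n) ℝ) : ℝ :=
  (spectralRadius ℂ (A.map Complex.ofReal)).toReal

def MatIrred {n : ℕ} (A : Matrix (Fin n) (Fin n) ℝ) : Prop :=
  ∀ i j, ∃ k : ℕ, 0 < k ∧ 0 < (A ^ k) i j

def MatPrimitive {n : ℕ} (A : Matrix (Fin n) (Fin n) ℝ) : Prop :=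
  ∃ k : ℕ, 0 < k ∧ ∀ i j, 0 < (A ^ k) i j

section Aux

variable {n : ℕ}

lemma mulEntryNonneg {A B : Matrix (Fin n) (Fin n) ℝ} (hA : ∀ i j, 0 ≤ A i j)
    (hB : ∀ i j, 0 ≤ B i j) : ∀ i j, 0 ≤ (A * B) i j := by
  intro i j
  rw [Matrix.mul_apply]
  exact Finset.sum_nonneg fun k _ => mul_nonneg (hA i k) (hB k j)

lemma powEntryNonneg {A : Matrix (Fin n) (Fin n) ℝ} (hA : ∀ i j, 0 ≤ A i j) :
    ∀ m i j, 0 ≤ (A ^ m) i j := by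
  intro m
  induction m with
  | zero =>
    intro i j
    rw [pow_zero]
    by_cases h : i = j <;> simp [Matrix.one_apply, h]
  | succ m ih =>
    rw [pow_succ]
    exact mulEntryNonneg ih hA

lemma mulSingleLe {A B : Matrix (Fin n) (Fin n) ℝ} (hA : ∀ i j, 0 ≤ A i j)
    (hB : ∀ i j, 0 ≤ B i j) (i v j : Fin n) : A i v * B v j ≤ (A * B) i j := by
  rw [Matrix.mul_apply]
  exact Finset.single_le_sum (f := fun k => A i k * B k j)
    (fun k _ => mul_nonneg (hA i k) (hB k j)) (Finset.mem_univ v)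

section Norms

attribute [local instance] Matrix.linftyOpNormedAddCommGroup Matrix.linftyOpNormedRing
  Matrix.linftyOpNormedAlgebra

lemma entryNormLe (A : Matrix (Fin n) (Fin n) ℝ) (i j : Fin n) : ‖A i j‖ ≤ ‖A‖ := by
  have h1 : ‖A i j‖₊ ≤ ∑ j' : Fin n, ‖A i j'‖₊ :=
    Finset.single_le_sum (f := fun j' => ‖A i j'‖₊) (fun _ _ => zero_le) (Finset.mem_univ j)
  have h2 : (∑ j' : Fin n, ‖A i j'‖₊) ≤ ‖A‖₊ := by
    rw [Matrix.linfty_opNNNorm_def]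
    exact Finset.le_sup (f := fun i => ∑ j' : Fin n, ‖A i j'‖₊) (Finset.mem_univ i)
  exact_mod_cast h1.trans h2

lemma nnnormMapOfReal (A : Matrix (Fin n) (Fin n) ℝ) : ‖A.map Complex.ofReal‖₊ = ‖A‖₊ := by
  rw [Matrix.linfty_opNNNorm_def, Matrix.linfty_opNNNorm_def]
  simp [Matrix.map_apply]

lemma existsNormPowLtOne [Nonempty (Fin n)] (T : Matrix (Fin n) (Fin n) ℝ)
    (hρ : specRad T < 1) : ∃ m : ℕ, 0 < m ∧ ‖T ^ m‖ < 1 := by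
  set A := T.map Complex.ofReal with hAdef
  have hApow : ∀ k : ℕ, A ^ k = (T ^ k).map Complex.ofReal := by
    intro k
    have : A = Complex.ofRealHom.mapMatrix T := rfl
    rw [this, ← map_pow]
    rfl
  have hfin : spectralRadius ℂ A ≠ ⊤ :=
    ((spectrum.spectralRadius_le_nnnorm A).trans_lt ENNReal.coe_lt_top).ne
  have hlt : spectralRadius ℂ A < 1 := by
    rw [← ENNReal.ofReal_one]
    exact (ENNReal.lt_ofReal_iff_toReal_lt hfin).mpr hρ
  have hg := spectrum.pow_nnnorm_pow_one_div_tendsto_nhds_spectralRadius A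
  obtain ⟨N₀, hN₀⟩ := eventually_atTop.mp (hg.eventually_lt_const hlt)
  set m := max N₀ 1 with hm
  have hm1 : 0 < m := lt_of_lt_of_le one_pos (le_max_right _ _)
  have h := hN₀ m (le_max_left _ _)
  have hmlt : (‖A ^ m‖₊ : ENNReal) < 1 := by
    by_contra hge
    push_neg at hge
    have : (0:ℝ) < 1 / m := by positivity
    exact absurd (ENNReal.one_le_rpow hge this) (not_le.mpr h)
  refine ⟨m, hm1, ?_⟩
  have : ‖A ^ m‖₊ < 1 := by exact_mod_cast hmlt
  rw [hApow, nnnormMapOfReal] at this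
  exact_mod_cast this

lemma invOneSubEntryGe [Nonempty (Fin n)] (T : Matrix (Fin n) (Fin n) ℝ)
    (hT : ∀ i j, 0 ≤ T i j) (hρ : specRad T < 1) :
    ∀ (p : ℕ) (i j : Fin n), (T ^ p) i j ≤ (1 - T)⁻¹ i j := by
  obtain ⟨m, hm, hcm⟩ := existsNormPowLtOne T hρ
  -- (1 - T) is invertible with right inverse
  have hB : (1 - T) * ((∑ k ∈ Finset.range m, T ^ k) * (1 - T ^ m)⁻¹) = 1 := by
    rw [← Matrix.mul_assoc, mul_neg_geom_sum]
    exact Matrix.mul_nonsing_inv _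
      ((Matrix.isUnit_iff_isUnit_det _).mp (isUnit_one_sub_of_norm_lt_one hcm))
  have hMinv : (1 - T) * (1 - T)⁻¹ = 1 := by
    rw [Matrix.inv_eq_right_inv hB]; exact hB
  have hpartial : ∀ N : ℕ,
      (∑ k ∈ Finset.range N, T ^ k) = (1 - T)⁻¹ - T ^ N * (1 - T)⁻¹ := by
    intro N
    calc (∑ k ∈ Finset.range N, T ^ k)
        = (∑ k ∈ Finset.range N, T ^ k) * ((1 - T) * (1 - T)⁻¹) := by rw [hMinv, mul_one]
      _ = ((∑ k ∈ Finset.range N, T ^ k) * (1 - T)) * (1 - T)⁻¹ := by rw [mul_assoc]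
      _ = (1 - T ^ N) * (1 - T)⁻¹ := by rw [geom_sum_mul_neg]
      _ = (1 - T)⁻¹ - T ^ N * (1 - T)⁻¹ := by rw [sub_mul, one_mul]
  -- T ^ N tends to 0 entrywise
  set C := ∑ r ∈ Finset.range m, ‖T ^ r‖ with hC
  have hCbound : ∀ N : ℕ, ‖T ^ N‖ ≤ C * ‖T ^ m‖ ^ (N / m) := by
    intro N
    conv_lhs => rw [← Nat.div_add_mod N m, pow_add, pow_mul]
    calc ‖(T ^ m) ^ (N / m) * T ^ (N % m)‖
        ≤ ‖(T ^ m) ^ (N / m)‖ * ‖T ^ (N % m)‖ := norm_mul_le _ _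
      _ ≤ ‖T ^ m‖ ^ (N / m) * ‖T ^ (N % m)‖ :=
          mul_le_mul_of_nonneg_right (norm_pow_le _ _) (norm_nonneg _)
      _ ≤ ‖T ^ m‖ ^ (N / m) * C :=
          mul_le_mul_of_nonneg_left
            (Finset.single_le_sum (f := fun r => ‖T ^ r‖) (fun r _ => norm_nonneg _)
              (Finset.mem_range.mpr (Nat.mod_lt _ hm)))
            (pow_nonneg (norm_nonneg _) _)
      _ = C * ‖T ^ m‖ ^ (N / m) := mul_comm _ _
  have hbnd : Tendsto (fun N : ℕ => C * ‖T ^ m‖ ^ (N / m)) atTop (𝓝 0) := by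
    have h1 : Tendsto (fun q : ℕ => ‖T ^ m‖ ^ q) atTop (𝓝 0) :=
      tendsto_pow_atTop_nhds_zero_of_lt_one (norm_nonneg _) hcm
    have h2 : Tendsto (fun N : ℕ => N / m) atTop atTop :=
      le_of_eq (Filter.map_div_atTop_eq_nat m hm)
    have := (h1.comp h2).const_mul C
    simpa using this
  have hentry : ∀ i j : Fin n, Tendsto (fun N : ℕ => (T ^ N) i j) atTop (𝓝 0) := by
    intro i j
    exact squeeze_zero_norm (fun N => (entryNormLe _ i j).trans (hCbound N)) hbnd
  -- conclude
  intro p i j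
  have hmulM : Tendsto (fun N : ℕ => (T ^ N * (1 - T)⁻¹) i j) atTop (𝓝 0) := by
    simp only [Matrix.mul_apply]
    have := tendsto_finset_sum (Finset.univ : Finset (Fin n))
      (fun u _ => (hentry i u).mul_const ((1 - T)⁻¹ u j))
    simpa using this
  have hs : Tendsto (fun N : ℕ => (∑ k ∈ Finset.range N, T ^ k) i j) atTop
      (𝓝 ((1 - T)⁻¹ i j)) := by
    have heq : ∀ N : ℕ, (∑ k ∈ Finset.range N, T ^ k) i j
        = (1 - T)⁻¹ i j - (T ^ N * (1 - T)⁻¹) i j := by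
      intro N
      rw [hpartial N, Matrix.sub_apply]
    have := (tendsto_const_nhds (x := (1 - T)⁻¹ i j) (f := atTop)).sub hmulM
    rw [sub_zero] at this
    exact this.congr fun N => (heq N).symm
  refine ge_of_tendsto hs ?_
  filter_upwards [eventually_ge_atTop (p + 1)] with N hN
  rw [Matrix.sum_apply]
  exact Finset.single_le_sum (f := fun k => (T ^ k) i j)
    (fun k _ => powEntryNonneg hT k i j) (Finset.mem_range.mpr (by omega))

end Norms

end Aux

theorem nextgen_rows_and_irreducibility {n : ℕ} (T F : Matrix (Fin n) (Fin n) ℝ)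
    (hT : ∀ i j, 0 ≤ T i j) (hF : ∀ i j, 0 ≤ F i j)
    (hρ : specRad T < 1) (hF0 : F ≠ 0) (hirr : MatIrred (T + F)) :
    (∀ i, (∀ j, (F * (1 - T)⁻¹) i j = 0) ↔ (∀ j, F i j = 0)) ∧
    (MatIrred (F * (1 - T)⁻¹) ↔ ∀ i, ∃ j, 0 < F i j) := by
  rcases Nat.eq_zero_or_pos n with hn | hn
  · refine absurd ?_ hF0
    subst hn
    ext i j
    exact i.elim0
  have : Nonempty (Fin n) := ⟨⟨0, hn⟩⟩
  set M := (1 - T)⁻¹ with hMdef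
  have hMge : ∀ p i j, (T ^ p) i j ≤ M i j := invOneSubEntryGe T hT hρ
  have hM0 : ∀ i j, 0 ≤ M i j := fun i j => (powEntryNonneg hT 0 i j).trans (hMge 0 i j)
  have hMdiag : ∀ i, 1 ≤ M i i := fun i => by
    have := hMge 0 i i
    simpa [Matrix.one_apply] using this
  set Q := F * M with hQdef
  have hQ0 : ∀ i j, 0 ≤ Q i j := mulEntryNonneg hF hM0
  have part1 : ∀ i, (∀ j, Q i j = 0) ↔ ∀ j, F i j = 0 := by
    intro i
    constructor
    · intro h j
      have h1 : F i j * M j j ≤ Q i j := mulSingleLe hF hM0 i j j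
      have h2 : F i j ≤ F i j * M j j := le_mul_of_one_le_right (hF i j) (hMdiag j)
      have h3 : F i j ≤ 0 := by rw [← h j]; exact h2.trans h1
      exact le_antisymm h3 (hF i j)
    · intro h j
      rw [hQdef, Matrix.mul_apply]
      exact Finset.sum_eq_zero fun k _ => by rw [h k, zero_mul]
  have hQge : ∀ (a : ℕ) (i j : Fin n), (F * T ^ a) i j ≤ Q i j := by
    intro a i j
    rw [hQdef, Matrix.mul_apply, Matrix.mul_apply]
    exact Finset.sum_le_sum fun k _ => mul_le_mul_of_nonneg_left (hMge a k j) (hF i k)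
  refine ⟨part1, ?_, ?_⟩
  · intro hQirr i
    by_contra hcon
    push_neg at hcon
    have hFrow : ∀ j, F i j = 0 := fun j => le_antisymm (hcon j) (hF i j)
    have hQrow : ∀ j, Q i j = 0 := (part1 i).mpr hFrow
    obtain ⟨k, hk, hpos⟩ := hQirr i i
    obtain ⟨k', rfl⟩ := Nat.exists_eq_succ_of_ne_zero hk.ne'
    have hzero : (Q ^ (k' + 1)) i i = 0 := by
      rw [pow_succ', Matrix.mul_apply]
      exact Finset.sum_eq_zero fun u _ => by rw [hQrow u, zero_mul]
    rw [hzero] at hpos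
    exact lt_irrefl _ hpos
  · intro hrow
    have hTF0 : ∀ p q, 0 ≤ (T + F) p q := fun p q => add_nonneg (hT p q) (hF p q)
    have claim : ∀ (k : ℕ) (w j : Fin n), 0 < ((T + F) ^ k) w j →
        ∃ a l : ℕ, 0 < (T ^ a * Q ^ l) w j := by
      intro k
      induction k with
      | zero =>
        intro w j h
        refine ⟨0, 0, ?_⟩
        simpa using h
      | succ k ih =>
        intro w j h
        rw [pow_succ', Matrix.mul_apply] at h
        have hex : ∃ v, 0 < ((T + F) w v * ((T + F) ^ k) v j) := by
          by_contra hc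
          push_neg at hc
          exact absurd (Finset.sum_nonpos fun v _ => hc v) (not_le.mpr h)
        obtain ⟨v, hv⟩ := hex
        have hSk0 : ∀ p q, 0 ≤ ((T + F) ^ k) p q := powEntryNonneg hTF0 k
        have h1 : 0 < (T + F) w v := by
          rcases mul_pos_iff.mp hv with ⟨hx, _⟩ | ⟨hx, _⟩
          · exact hx
          · exact absurd hx (not_lt.mpr (hTF0 w v))
        have h2 : 0 < ((T + F) ^ k) v j := by
          rcases mul_pos_iff.mp hv with ⟨_, hy⟩ | ⟨_, hy⟩
          · exact hy
          · exact absurd hy (not_lt.mpr (hSk0 v j))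
        obtain ⟨a, l, hal⟩ := ih v j h2
        have hTaQl : ∀ p q, 0 ≤ (T ^ a * Q ^ l) p q :=
          mulEntryNonneg (powEntryNonneg hT a) (powEntryNonneg hQ0 l)
        have hTor : 0 < T w v ∨ 0 < F w v := by
          by_contra hc
          push_neg at hc
          have hz : (T + F) w v = 0 := by
            have hT0 : T w v = 0 := le_antisymm hc.1 (hT w v)
            have hF0' : F w v = 0 := le_antisymm hc.2 (hF w v)
            simp [Matrix.add_apply, hT0, hF0']
          exact h1.ne' hz
        rcases hTor with hTe | hFe
        · refine ⟨a + 1, l, ?_⟩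
          have hle : T w v * (T ^ a * Q ^ l) v j ≤ (T * (T ^ a * Q ^ l)) w j :=
            mulSingleLe hT hTaQl w v j
          have hpos : 0 < (T * (T ^ a * Q ^ l)) w j := lt_of_lt_of_le (mul_pos hTe hal) hle
          rw [pow_succ', mul_assoc]
          exact hpos
        · refine ⟨0, l + 1, ?_⟩
          have key : (F * T ^ a * Q ^ l) w j ≤ (Q * Q ^ l) w j := by
            rw [Matrix.mul_apply, Matrix.mul_apply]
            exact Finset.sum_le_sum fun u _ =>
              mul_le_mul_of_nonneg_right (hQge a w u) (powEntryNonneg hQ0 l u j)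
          have hle : F w v * (T ^ a * Q ^ l) v j ≤ (F * (T ^ a * Q ^ l)) w j :=
            mulSingleLe hF hTaQl w v j
          have hpos : 0 < (F * (T ^ a * Q ^ l)) w j := lt_of_lt_of_le (mul_pos hFe hal) hle
          rw [← mul_assoc] at hpos
          have hfin : 0 < (Q * Q ^ l) w j := lt_of_lt_of_le hpos key
          simpa [pow_succ'] using hfin
    show ∀ i j, ∃ k : ℕ, 0 < k ∧ 0 < (Q ^ k) i j
    intro i j
    obtain ⟨w, hw⟩ := hrow i
    obtain ⟨k, hk, hkpos⟩ := hirr w j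
    obtain ⟨a, l, hal⟩ := claim k w j hkpos
    refine ⟨l + 1, Nat.succ_pos l, ?_⟩
    have hTaQl : ∀ p q, 0 ≤ (T ^ a * Q ^ l) p q :=
      mulEntryNonneg (powEntryNonneg hT a) (powEntryNonneg hQ0 l)
    have key : (F * T ^ a * Q ^ l) i j ≤ (Q * Q ^ l) i j := by
      rw [Matrix.mul_apply, Matrix.mul_apply]
      exact Finset.sum_le_sum fun u _ =>
        mul_le_mul_of_nonneg_right (hQge a i u) (powEntryNonneg hQ0 l u j)
    have hle : F i w * (T ^ a * Q ^ l) w j ≤ (F * (T ^ a * Q ^ l)) i j :=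
      mulSingleLe hF hTaQl i w j
    have hpos : 0 < (F * (T ^ a * Q ^ l)) i j := lt_of_lt_of_le (mul_pos hw hal) hle
    rw [← mul_assoc] at hpos
    have hfin : 0 < (Q * Q ^ l) i j := lt_of_lt_of_le hpos key
    rw [pow_succ']
    exact hfin
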